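/- The element v satisfies: (1) v is invertible in A, with inverse v⁻¹ = (1/N)·(Σ_{k=0}^{N−1} (−1)^k t^{−k²})·(Σ_{j=0}^{N−1} (−1)^j t^{j²} K^{2j+N}); (2) S(v) = v, where S is the antipode of A; (3) Δ(v) = P(R)·R·(v ⊗ v), where Δ is the comultiplication of A and P : A ⊗ A → A ⊗ A is the flip x ⊗ y ↦ y ⊗ x. (These are the defining identities making (A, R, v) a ribbon Hopf algebra.) -/

import Mathlib

open Finset TensorProduct

noncomputable section

/-- The quantum group `U_t(u(1)) = ℂ[ℤ_{2N}]`, the complex group algebra of the cyclic group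
`ℤ_{2N}`. -/
abbrev QG (N : ℕ) := MonoidAlgebra ℂ (Multiplicative (ZMod (2 * N)))

/-- The basis element `K^j`, `j ∈ ℤ_{2N}` (`K` is the image of the fixed generator `1`). -/
def KK (N : ℕ) (j : ZMod (2 * N)) : QG N :=
  MonoidAlgebra.single (Multiplicative.ofAdd j) 1

/-- `t = exp(πi/N)`, a primitive `2N`-th root of unity. -/
def tq (N : ℕ) : ℂ := Complex.exp ((Real.pi : ℂ) * Complex.I / N)

/-- The universal `R`-matrix `R = (1/2N) Σ_{j,k ∈ ℤ_{2N}} t^{−jk} K^j ⊗ K^k`. -/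
def Rmat (N : ℕ) : QG N ⊗[ℂ] QG N :=
  (2 * (N : ℂ))⁻¹ • ∑ j ∈ Finset.range (2 * N), ∑ k ∈ Finset.range (2 * N),
    tq N ^ (-((j : ℤ) * (k : ℤ))) • (KK N (j : ZMod (2 * N)) ⊗ₜ[ℂ] KK N (k : ZMod (2 * N)))

/-- The comultiplication `Δ : A → A ⊗ A`, `Δ(K^j) = K^j ⊗ K^j`. -/
def DeltaQG (N : ℕ) : QG N →ₐ[ℂ] QG N ⊗[ℂ] QG N :=
  (MonoidAlgebra.lift ℂ (QG N ⊗[ℂ] QG N) (Multiplicative (ZMod (2 * N))))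
    { toFun := fun x => MonoidAlgebra.single x 1 ⊗ₜ[ℂ] MonoidAlgebra.single x 1
      map_one' := by
        simp [MonoidAlgebra.one_def, Algebra.TensorProduct.one_def]
      map_mul' := fun x y => by
        simp only [Algebra.TensorProduct.tmul_mul_tmul, MonoidAlgebra.single_mul_single,
          one_mul] }

/-- The antipode `S : A → A`, `S(K^j) = K^{−j}`. -/
def SQG (N : ℕ) : QG N →ₐ[ℂ] QG N :=
  (MonoidAlgebra.lift ℂ (QG N) (Multiplicative (ZMod (2 * N))))
    { toFun := fun x => MonoidAlgebra.single x⁻¹ 1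
      map_one' := by simp [MonoidAlgebra.one_def]
      map_mul' := fun x y => by
        simp only [mul_inv, MonoidAlgebra.single_mul_single, one_mul] }

/-- The universal twist `v = (1/2N) Σ_{j,k ∈ ℤ_{2N}} t^{(k+j)k} K^j`. -/
def vel (N : ℕ) : QG N :=
  (2 * (N : ℂ))⁻¹ • ∑ j ∈ Finset.range (2 * N), ∑ k ∈ Finset.range (2 * N),
    tq N ^ ((k + j) * k) • KK N (j : ZMod (2 * N))

/-- The claimed inverse
`v⁻¹ = (1/N)·(Σ_{k=0}^{N−1} (−1)^k t^{−k²})·(Σ_{j=0}^{N−1} (−1)^j t^{j²} K^{2j+N})`. -/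
def velInv (N : ℕ) : QG N :=
  ((N : ℂ)⁻¹ * ∑ k ∈ Finset.range N, (-1 : ℂ) ^ k * tq N ^ (-((k : ℤ) ^ 2))) •
    ∑ j ∈ Finset.range N, ((-1 : ℂ) ^ j * tq N ^ (j ^ 2)) • KK N ((2 * j + N : ℕ) : ZMod (2 * N))

namespace StmtAux

variable {N : ℕ}

lemma tq_ne_zero (N : ℕ) : tq N ≠ 0 := Complex.exp_ne_zero _

lemma tq_pow_N (hpos : 0 < N) : tq N ^ N = -1 := by
  have hN : (N : ℂ) ≠ 0 := Nat.cast_ne_zero.mpr hpos.ne'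
  rw [tq, ← Complex.exp_nat_mul]
  rw [show (N : ℂ) * ((Real.pi : ℂ) * Complex.I / N) = (Real.pi : ℂ) * Complex.I by field_simp]
  exact Complex.exp_pi_mul_I

lemma tq_prim (hpos : 0 < N) : IsPrimitiveRoot (tq N) (2 * N) := by
  have h := Complex.isPrimitiveRoot_exp (2 * N) (by omega)
  have he : Complex.exp (2 * Real.pi * Complex.I / ((2 * N : ℕ) : ℂ)) = tq N := by
    rw [tq]
    congr 1
    have hN : (N : ℂ) ≠ 0 := Nat.cast_ne_zero.mpr hpos.ne'
    push_cast
    field_simp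
  rwa [he] at h

lemma tq_pow_2N (hpos : 0 < N) : tq N ^ (2 * N) = 1 := (tq_prim hpos).pow_eq_one

lemma tq_pow_mod (hpos : 0 < N) (a : ℕ) : tq N ^ a = tq N ^ (a % (2 * N)) := by
  conv_lhs => rw [← Nat.div_add_mod a (2 * N)]
  rw [pow_add, pow_mul, tq_pow_2N hpos, one_pow, one_mul]

/-- `ee x = t ^ x` for `x : ℤ_{2N}`. -/
def ee (N : ℕ) (x : ZMod (2 * N)) : ℂ := tq N ^ x.val

lemma ee_congr {x y : ZMod (2 * N)} (h : x = y) : ee N x = ee N y := congrArg _ h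

lemma ee_natCast (hpos : 0 < N) (a : ℕ) : ee N ((a : ℕ) : ZMod (2 * N)) = tq N ^ a := by
  rw [ee, ZMod.val_natCast, ← tq_pow_mod hpos]

lemma ee_add (hpos : 0 < N) (x y : ZMod (2 * N)) : ee N (x + y) = ee N x * ee N y := by
  haveI : NeZero (2 * N) := ⟨by omega⟩
  rw [ee, ee, ee, ZMod.val_add, ← tq_pow_mod hpos, pow_add]

lemma ee_mul_ee (hpos : 0 < N) (x y : ZMod (2 * N)) : ee N x * ee N y = ee N (x + y) :=
  (ee_add hpos x y).symm

lemma ee_zero (hpos : 0 < N) : ee N (0 : ZMod (2 * N)) = 1 := by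
  haveI : NeZero (2 * N) := ⟨by omega⟩
  rw [ee, ZMod.val_zero, pow_zero]

lemma ee_intCast (hpos : 0 < N) (m : ℤ) : ee N ((m : ℤ) : ZMod (2 * N)) = tq N ^ m := by
  have h2 : (0:ℤ) < ((2 * N : ℕ) : ℤ) := by exact_mod_cast (by omega : 0 < 2*N)
  have hnn : 0 ≤ m % ((2 * N : ℕ) : ℤ) := Int.emod_nonneg m h2.ne'
  have htn : (((m % ((2*N:ℕ):ℤ)).toNat : ℕ) : ℤ) = m % ((2*N:ℕ):ℤ) := Int.toNat_of_nonneg hnn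
  have key : ((m : ℤ) : ZMod (2 * N)) = (((m % ((2*N:ℕ):ℤ)).toNat : ℕ) : ZMod (2 * N)) := by
    rw [← ZMod.intCast_mod m (2*N)]
    conv_lhs => rw [← htn, Int.cast_natCast]
  rw [key, ee_natCast hpos]
  rw [← zpow_natCast (tq N), htn]
  conv_rhs => rw [← Int.mul_ediv_add_emod m ((2*N:ℕ):ℤ)]
  rw [zpow_add₀ (tq_ne_zero N), zpow_mul, zpow_natCast, tq_pow_2N hpos, one_zpow, one_mul]

lemma ee_ne_one (hpos : 0 < N) {c : ZMod (2 * N)} (hc : c ≠ 0) : ee N c ≠ 1 := by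
  haveI : NeZero (2 * N) := ⟨by omega⟩
  intro h
  apply hc
  rw [ee, (tq_prim hpos).pow_eq_one_iff_dvd] at h
  have hv := ZMod.val_lt c
  have : c.val = 0 := by
    rcases h with ⟨t, ht⟩
    rcases Nat.eq_zero_or_pos t with rfl | htpos
    · omega
    · have : 2 * N * 1 ≤ 2 * N * t := Nat.mul_le_mul_left _ htpos
      omega
  rwa [← ZMod.val_eq_zero]

lemma sum_ee (hpos : 0 < N) [NeZero (2 * N)] (c : ZMod (2 * N)) :
    ∑ x : ZMod (2 * N), ee N (c * x) = if c = 0 then (2 * (N:ℂ)) else 0 := by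
  split_ifs with h
  · subst h
    simp only [zero_mul, ee_zero hpos, Finset.sum_const, card_univ, ZMod.card, nsmul_eq_mul,
      mul_one]
    push_cast; ring
  · have h1 : ee N c ≠ 1 := ee_ne_one hpos h
    have key : (∑ x : ZMod (2 * N), ee N (c * x)) * ee N c = ∑ x : ZMod (2 * N), ee N (c * x) := by
      rw [Finset.sum_mul]
      refine Fintype.sum_equiv (Equiv.addRight 1) _ _ fun x => ?_
      rw [ee_mul_ee hpos]
      simp only [Equiv.coe_addRight]
      exact ee_congr (by ring)
    by_contra hS
    exact h1 (mul_left_cancel₀ hS (by rw [key, mul_one]))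

variable {N : ℕ}

lemma sum_range_to_univ {M : Type*} [AddCommMonoid M] {n : ℕ} [NeZero n] (g : ℕ → M)
    (h : ZMod n → M) (hgh : ∀ j, j < n → g j = h ((j : ℕ) : ZMod n)) :
    ∑ j ∈ range n, g j = ∑ x : ZMod n, h x := by
  refine Finset.sum_nbij' (fun j => ((j : ℕ) : ZMod n)) (fun x => x.val) ?_ ?_ ?_ ?_ ?_
  · intro a _; exact mem_univ _
  · intro x _; exact mem_range.2 (ZMod.val_lt x)
  · intro a ha; exact ZMod.val_cast_of_lt (mem_range.1 ha)
  · intro x _; exact ZMod.natCast_zmod_val x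
  · intro a ha; exact hgh a (mem_range.1 ha)

lemma sum_shift {M : Type*} [AddCommMonoid M] [NeZero (2 * N)] (c : ZMod (2 * N))
    (f g : ZMod (2 * N) → M) (hfg : ∀ x, f x = g (x + c)) :
    ∑ x : ZMod (2 * N), f x = ∑ x : ZMod (2 * N), g x :=
  Fintype.sum_equiv (Equiv.addRight c) f g (by intro x; rw [hfg x]; rfl)

lemma sum_negation {M : Type*} [AddCommMonoid M] [NeZero (2 * N)]
    (f g : ZMod (2 * N) → M) (hfg : ∀ x, f x = g (-x)) :
    ∑ x : ZMod (2 * N), f x = ∑ x : ZMod (2 * N), g x :=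
  Fintype.sum_equiv (Equiv.neg _) f g (by intro x; rw [hfg x]; rfl)

lemma sum_range_pair {M : Type*} [AddCommMonoid M] (m : ℕ) (h : ℕ → M) :
    ∑ j ∈ range (2 * m), h j = ∑ i ∈ range m, (h (2 * i) + h (2 * i + 1)) := by
  induction m with
  | zero => simp
  | succ m ih =>
      rw [show 2 * (m + 1) = 2 * m + 1 + 1 by ring, sum_range_succ, sum_range_succ, ih,
        sum_range_succ, add_assoc]

lemma sum_univ_periodic {M : Type*} [AddCommMonoid M] [NeZero (2 * N)] (g : ZMod (2 * N) → M)
    (hg : ∀ x, g (x + ((N : ℕ) : ZMod (2 * N))) = g x) :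
    ∑ x : ZMod (2 * N), g x = 2 • ∑ i ∈ range N, g ((i : ℕ) : ZMod (2 * N)) := by
  rw [← sum_range_to_univ (fun j => g ((j : ℕ) : ZMod (2 * N))) g (fun _ _ => rfl)]
  have hr : range (2 * N) = range (N + N) := by rw [two_mul]
  rw [hr, Finset.sum_range_add]
  have : ∀ i : ℕ, g ((N + i : ℕ) : ZMod (2 * N)) = g ((i : ℕ) : ZMod (2 * N)) := by
    intro i
    rw [show ((N + i : ℕ) : ZMod (2 * N)) = ((i : ℕ) : ZMod (2 * N)) + ((N : ℕ) : ZMod (2 * N))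
      by push_cast; ring, hg]
  rw [Finset.sum_congr rfl fun i _ => this i, two_smul]

lemma h2N : (2 : ZMod (2 * N)) * ((N : ℕ) : ZMod (2 * N)) = 0 := by
  have := ZMod.natCast_self (2 * N)
  push_cast at this
  exact this

lemma NN_zero (hN : Even N) :
    ((N : ℕ) : ZMod (2 * N)) * ((N : ℕ) : ZMod (2 * N)) = 0 := by
  obtain ⟨m, rfl⟩ := hN
  have : (((m + m) * (m + m) : ℕ) : ZMod (2 * (m + m))) = 0 := by
    rw [ZMod.natCast_eq_zero_iff]
    exact ⟨m, by ring⟩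
  push_cast at this ⊢
  linear_combination this

lemma Ncast_ne_zero (hpos : 0 < N) : ((N : ℕ) : ZMod (2 * N)) ≠ 0 := by
  rw [Ne, ZMod.natCast_eq_zero_iff]
  intro hdvd
  have := Nat.le_of_dvd hpos hdvd
  omega

lemma two_torsion (hpos : 0 < N) {c : ZMod (2 * N)} (h : 2 * c = 0) :
    c = 0 ∨ c = ((N : ℕ) : ZMod (2 * N)) := by
  haveI : NeZero (2 * N) := ⟨by omega⟩
  have hv : c = ((c.val : ℕ) : ZMod (2 * N)) := (ZMod.natCast_zmod_val c).symm
  have h2 : ((2 * c.val : ℕ) : ZMod (2 * N)) = 0 := by push_cast; rw [← hv]; exact h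
  rw [ZMod.natCast_eq_zero_iff] at h2
  have hvl : c.val < 2 * N := ZMod.val_lt c
  have hNd : N ∣ c.val := by
    rcases h2 with ⟨t, ht⟩
    rw [show 2 * N * t = 2 * (N * t) by ring] at ht
    exact ⟨t, by omega⟩
  rcases hNd with ⟨k, hk⟩
  have hk1 : k ≤ 1 := by
    by_contra hk2
    have : N * 2 ≤ N * k := Nat.mul_le_mul_left _ (by omega)
    omega
  interval_cases k
  · left; rw [hv]; simp [hk]
  · right; rw [hv, hk, mul_one]

lemma sum_two_torsion {M : Type*} [AddCommMonoid M] [NeZero (2 * N)] (hpos : 0 < N)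
    (f : ZMod (2 * N) → M) :
    (∑ c : ZMod (2 * N), if 2 * c = 0 then f c else 0)
      = f 0 + f ((N : ℕ) : ZMod (2 * N)) := by
  have hNne := Ncast_ne_zero (N := N) hpos
  have step : ∀ c : ZMod (2 * N), (if 2 * c = 0 then f c else 0)
      = (if c = 0 then f c else 0) + (if c = ((N : ℕ) : ZMod (2 * N)) then f c else 0) := by
    intro c
    by_cases h0 : c = 0
    · subst h0
      rw [if_pos (mul_zero 2), if_pos rfl, if_neg (fun h => hNne h.symm), add_zero]
    · by_cases h1 : c = ((N : ℕ) : ZMod (2 * N))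
      · subst h1
        rw [if_pos h2N, if_neg h0, if_pos rfl, zero_add]
      · rw [if_neg h0, if_neg h1, if_neg, add_zero]
        intro h
        rcases two_torsion hpos h with h' | h'
        · exact h0 h'
        · exact h1 h'
  rw [Finset.sum_congr rfl fun c _ => step c, Finset.sum_add_distrib]
  congr 1 <;> simp


end StmtAux

namespace StmtAux

variable {N : ℕ}

lemma KK_congr {x y : ZMod (2 * N)} (h : x = y) : KK N x = KK N y := congrArg _ h

lemma KK_mul (a b : ZMod (2 * N)) : KK N a * KK N b = KK N (a + b) := by
  rw [KK, KK, KK, MonoidAlgebra.single_mul_single, one_mul, ← ofAdd_add]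

lemma KK_zero : KK N (0 : ZMod (2 * N)) = 1 := by
  rw [KK, ofAdd_zero, MonoidAlgebra.one_def]

lemma Delta_KK (j : ZMod (2 * N)) : DeltaQG N (KK N j) = KK N j ⊗ₜ[ℂ] KK N j := by
  simp only [DeltaQG, KK, MonoidAlgebra.lift_single, one_smul]
  rfl

lemma S_KK (j : ZMod (2 * N)) : SQG N (KK N j) = KK N (-j) := by
  simp only [SQG, KK, MonoidAlgebra.lift_single, one_smul, ← ofAdd_neg]
  rfl

/-- Gauss sum `G0p = Σ t^{k²}`. -/
def G0p (N : ℕ) [NeZero (2 * N)] : ℂ := ∑ k : ZMod (2 * N), ee N (k * k)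

/-- Conjugate Gauss sum `G0m = Σ t^{-k²}`. -/
def G0m (N : ℕ) [NeZero (2 * N)] : ℂ := ∑ k : ZMod (2 * N), ee N (-(k * k))

/-- `va = Σ_a t^{-a²} K^{2a}`. -/
def va (N : ℕ) [NeZero (2 * N)] : QG N :=
  ∑ a : ZMod (2 * N), ee N (-(a * a)) • KK N (2 * a)

/-- `vb = Σ_a t^{a²} K^{2a}`. -/
def vb (N : ℕ) [NeZero (2 * N)] : QG N :=
  ∑ a : ZMod (2 * N), ee N (a * a) • KK N (2 * a)

lemma G0_mul (hpos : 0 < N) (hN : Even N) [NeZero (2 * N)] :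
    G0p N * G0m N = 4 * (N : ℂ) := by
  have hNN := NN_zero (N := N) hN
  calc G0p N * G0m N
      = ∑ k : ZMod (2 * N), ∑ l : ZMod (2 * N), ee N (k * k) * ee N (-(l * l)) := by
        rw [G0p, G0m, Finset.sum_mul_sum]
    _ = ∑ l : ZMod (2 * N), ∑ k : ZMod (2 * N), ee N (k * k) * ee N (-(l * l)) :=
        Finset.sum_comm
    _ = ∑ l : ZMod (2 * N), ∑ k : ZMod (2 * N), ee N (k * k) * ee N ((2 * k) * l) := by
        refine Finset.sum_congr rfl fun l _ => ?_
        refine sum_shift (-l) _ _ fun k => ?_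
        rw [ee_mul_ee hpos, ee_mul_ee hpos]
        exact ee_congr (by ring)
    _ = ∑ k : ZMod (2 * N), ∑ l : ZMod (2 * N), ee N (k * k) * ee N ((2 * k) * l) :=
        Finset.sum_comm
    _ = ∑ k : ZMod (2 * N), ee N (k * k) * (if 2 * k = 0 then (2 * (N:ℂ)) else 0) := by
        refine Finset.sum_congr rfl fun k _ => ?_
        rw [← Finset.mul_sum, sum_ee hpos]
    _ = ∑ k : ZMod (2 * N), (if 2 * k = 0 then ee N (k * k) * (2 * (N:ℂ)) else 0) := by
        refine Finset.sum_congr rfl fun k _ => ?_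
        rw [mul_ite, mul_zero]
    _ = ee N (0 * 0) * (2 * (N:ℂ))
          + ee N (((N:ℕ) : ZMod (2*N)) * ((N:ℕ) : ZMod (2*N))) * (2 * (N:ℂ)) :=
        sum_two_torsion hpos _
    _ = 4 * (N : ℂ) := by
        rw [mul_zero, hNN, ee_zero hpos]
        ring

lemma va_mul_vb (hpos : 0 < N) (hN : Even N) [NeZero (2 * N)] :
    va N * vb N = (4 * (N : ℂ)) • 1 := by
  have hNN := NN_zero (N := N) hN
  calc va N * vb N
      = ∑ a : ZMod (2 * N), ∑ b : ZMod (2 * N),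
          (ee N (-(a * a)) * ee N (b * b)) • KK N (2 * a + 2 * b) := by
        rw [va, vb, Finset.sum_mul_sum]
        refine Finset.sum_congr rfl fun a _ => Finset.sum_congr rfl fun b _ => ?_
        rw [smul_mul_assoc, mul_smul_comm, smul_smul, KK_mul]
    _ = ∑ a : ZMod (2 * N), ∑ b : ZMod (2 * N),
          (ee N ((-(2 * b)) * a) * ee N (b * b)) • KK N (2 * b) := by
        refine Finset.sum_congr rfl fun a _ => ?_
        refine sum_shift a _ _ fun b => ?_
        rw [ee_mul_ee hpos, ee_mul_ee hpos]
        congr 1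
        · exact ee_congr (by ring)
        · exact KK_congr (by ring)
    _ = ∑ b : ZMod (2 * N), ∑ a : ZMod (2 * N),
          (ee N ((-(2 * b)) * a) * ee N (b * b)) • KK N (2 * b) := Finset.sum_comm
    _ = ∑ b : ZMod (2 * N),
          ((if -(2 * b) = 0 then (2 * (N:ℂ)) else 0) * ee N (b * b)) • KK N (2 * b) := by
        refine Finset.sum_congr rfl fun b _ => ?_
        rw [← Finset.sum_smul, ← Finset.sum_mul, sum_ee hpos]
    _ = ∑ b : ZMod (2 * N),
          (if 2 * b = 0 then ((2 * (N:ℂ)) * ee N (b * b)) • KK N (2 * b) else 0) := by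
        refine Finset.sum_congr rfl fun b _ => ?_
        by_cases hb : (2 * b : ZMod (2 * N)) = 0
        · rw [if_pos (neg_eq_zero.mpr hb), if_pos hb]
        · rw [if_neg (fun h => hb (neg_eq_zero.mp h)), if_neg hb, zero_mul, zero_smul]
    _ = ((2 * (N:ℂ)) * ee N ((0:ZMod (2*N)) * 0)) • KK N (2 * 0)
          + ((2 * (N:ℂ)) * ee N (((N:ℕ):ZMod (2*N)) * ((N:ℕ):ZMod (2*N)))) •
            KK N (2 * ((N:ℕ):ZMod (2*N))) :=
        sum_two_torsion hpos _
    _ = (4 * (N : ℂ)) • 1 := by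
        rw [mul_zero, hNN, ee_zero hpos, mul_zero, KK_zero]
        rw [show (2 : ZMod (2*N)) * ((N:ℕ):ZMod (2*N)) = 0 from h2N, KK_zero]
        rw [← add_smul]
        congr 1
        ring

end StmtAux
namespace StmtAux

variable {N : ℕ}

/-- `Gf x = Σ_k t^{(k+x)k}`. -/
def Gf (N : ℕ) [NeZero (2 * N)] (x : ZMod (2 * N)) : ℂ :=
  ∑ k : ZMod (2 * N), ee N ((k + x) * k)

lemma vel_expand (hpos : 0 < N) [NeZero (2 * N)] :
    vel N = (2 * (N : ℂ))⁻¹ • ∑ x : ZMod (2 * N), Gf N x • KK N x := by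
  rw [vel]
  congr 1
  refine sum_range_to_univ _ _ fun j hj => ?_
  rw [← Finset.sum_smul]
  congr 1
  refine sum_range_to_univ _ _ fun k hk => ?_
  rw [← ee_natCast hpos]
  exact ee_congr (by push_cast; ring)

lemma Gf_even (hpos : 0 < N) [NeZero (2 * N)] (a : ZMod (2 * N)) :
    Gf N (2 * a) = ee N (-(a * a)) * G0p N := by
  rw [Gf, G0p, Finset.mul_sum]
  refine sum_shift a _ _ fun k => ?_
  rw [ee_mul_ee hpos]
  exact ee_congr (by ring)

lemma Gf_odd (hpos : 0 < N) (hN : Even N) [NeZero (2 * N)] (a : ZMod (2 * N)) :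
    Gf N (2 * a + 1) = 0 := by
  have hNN := NN_zero (N := N) hN
  have key : Gf N (2 * a + 1) = ∑ k : ZMod (2 * N), -(ee N ((k + (2 * a + 1)) * k)) := by
    rw [Gf]
    refine sum_shift ((N : ℕ) : ZMod (2 * N)) _ _ fun k => ?_
    have harg : ((k + ((N:ℕ):ZMod (2*N))) + (2 * a + 1)) * (k + ((N:ℕ):ZMod (2*N)))
        = (k + (2 * a + 1)) * k + ((N:ℕ):ZMod (2*N)) := by
      have h2 := h2N (N := N)
      linear_combination (k + a) * h2 + hNN
    rw [harg, ee_add hpos, ee_natCast hpos, tq_pow_N hpos, mul_neg_one, neg_neg]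
  have key2 : Gf N (2 * a + 1) = -(Gf N (2 * a + 1)) := by
    calc Gf N (2 * a + 1) = ∑ k : ZMod (2 * N), -(ee N ((k + (2 * a + 1)) * k)) := key
      _ = -(∑ k : ZMod (2 * N), ee N ((k + (2 * a + 1)) * k)) := by
          rw [Finset.sum_neg_distrib]
      _ = -(Gf N (2 * a + 1)) := by rw [Gf]
  have h2S : Gf N (2 * a + 1) + Gf N (2 * a + 1) = 0 := by linear_combination key2
  exact add_self_eq_zero.mp h2S

lemma vel_eq (hpos : 0 < N) (hN : Even N) [NeZero (2 * N)] :
    vel N = ((4 * (N : ℂ))⁻¹ * G0p N) • va N := by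
  have h2 := h2N (N := N)
  have hNN := NN_zero (N := N) hN
  set w : ZMod (2 * N) → QG N := fun x => (ee N (-(x * x)) * G0p N) • KK N (2 * x) with hw
  have hper : ∀ x, w (x + ((N:ℕ) : ZMod (2*N))) = w x := by
    intro x
    rw [hw]
    dsimp only
    congr 1
    · congr 1
      exact ee_congr (by linear_combination (-x) * h2 - hNN)
    · exact KK_congr (by linear_combination h2)
  have hA : ∑ x : ZMod (2 * N), Gf N x • KK N x = ∑ i ∈ range N, w ((i : ℕ) : ZMod (2 * N)) := by
    rw [← sum_range_to_univ (fun j => Gf N ((j:ℕ) : ZMod (2*N)) • KK N ((j:ℕ) : ZMod (2*N)))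
      (fun x => Gf N x • KK N x) (fun _ _ => rfl)]
    rw [sum_range_pair N]
    refine Finset.sum_congr rfl fun i _ => ?_
    have hcast1 : ((2 * i : ℕ) : ZMod (2 * N)) = 2 * ((i : ℕ) : ZMod (2 * N)) := by push_cast; ring
    have hcast2 : ((2 * i + 1 : ℕ) : ZMod (2 * N)) = 2 * ((i : ℕ) : ZMod (2 * N)) + 1 := by
      push_cast; ring
    rw [hcast1, hcast2, Gf_odd hpos hN, zero_smul, add_zero, Gf_even hpos, hw]
  have hsum : ∑ x : ZMod (2 * N), w x = 2 • ∑ i ∈ range N, w ((i : ℕ) : ZMod (2 * N)) :=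
    sum_univ_periodic w hper
  have hWva : ∑ x : ZMod (2 * N), w x = G0p N • va N := by
    rw [va, Finset.smul_sum]
    refine Finset.sum_congr rfl fun x _ => ?_
    rw [hw]
    dsimp only
    rw [mul_comm (ee N (-(x * x))) (G0p N), mul_smul]
  rw [vel_expand hpos, hA]
  have h2smul : (2:ℕ) • (∑ i ∈ range N, w ((i : ℕ) : ZMod (2 * N)))
      = (2:ℂ) • (∑ i ∈ range N, w ((i : ℕ) : ZMod (2 * N))) := by
    rw [← Nat.cast_smul_eq_nsmul ℂ]
    norm_num
  have hNc : (N : ℂ) ≠ 0 := Nat.cast_ne_zero.mpr hpos.ne'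
  have : G0p N • va N = (2:ℂ) • ∑ i ∈ range N, w ((i : ℕ) : ZMod (2 * N)) := by
    rw [← hWva, hsum, h2smul]
  calc (2 * (N : ℂ))⁻¹ • ∑ i ∈ range N, w ((i : ℕ) : ZMod (2 * N))
      = ((4 * (N : ℂ))⁻¹ * 2) • ∑ i ∈ range N, w ((i : ℕ) : ZMod (2 * N)) := by
        congr 1
        field_simp
        ring
    _ = (4 * (N : ℂ))⁻¹ • ((2:ℂ) • ∑ i ∈ range N, w ((i : ℕ) : ZMod (2 * N))) := by
        rw [smul_smul]
    _ = (4 * (N : ℂ))⁻¹ • (G0p N • va N) := by rw [← this]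
    _ = ((4 * (N : ℂ))⁻¹ * G0p N) • va N := by rw [smul_smul]

lemma S_va (hpos : 0 < N) [NeZero (2 * N)] : SQG N (va N) = va N := by
  rw [va, map_sum]
  have : ∀ a : ZMod (2 * N), SQG N (ee N (-(a * a)) • KK N (2 * a))
      = ee N (-(a * a)) • KK N (-(2 * a)) := by
    intro a
    rw [map_smul, S_KK]
  rw [Finset.sum_congr rfl fun a _ => this a]
  refine sum_negation _ _ fun a => ?_
  congr 1
  · exact ee_congr (by ring)
  · exact KK_congr (by ring)

end StmtAux
namespace StmtAux

variable {N : ℕ}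

lemma velInv_eq (hpos : 0 < N) (hN : Even N) [NeZero (2 * N)] :
    velInv N = ((4 * (N : ℂ))⁻¹ * G0m N) • vb N := by
  have h2 := h2N (N := N)
  obtain ⟨m, hm⟩ := hN
  set Nc : ZMod (2 * N) := ((N : ℕ) : ZMod (2 * N)) with hNcdef
  set mc : ZMod (2 * N) := ((m : ℕ) : ZMod (2 * N)) with hmc
  have hNm : Nc = mc + mc := by rw [hNcdef, hmc, hm]; push_cast; ring
  -- the scalar factor
  set Tf : ZMod (2 * N) → ℂ := fun x => ee N (x * (Nc - x)) with hTf
  have hT : ∀ k : ℕ, (-1 : ℂ) ^ k * tq N ^ (-((k : ℤ) ^ 2)) = Tf ((k : ℕ) : ZMod (2 * N)) := by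
    intro k
    rw [hTf]
    dsimp only
    have harg : ((k : ℕ) : ZMod (2 * N)) * (Nc - ((k : ℕ) : ZMod (2 * N)))
        = ((((k : ℤ) * (N : ℤ) + (-((k : ℤ) ^ 2))) : ℤ) : ZMod (2 * N)) := by
      rw [hNcdef]; push_cast; ring
    rw [harg, ee_intCast hpos, zpow_add₀ (tq_ne_zero N)]
    congr 1
    rw [show ((k : ℤ) * (N : ℤ)) = ((k * N : ℕ) : ℤ) by push_cast; ring, zpow_natCast,
      show k * N = N * k by ring, pow_mul, tq_pow_N hpos]
  have hTper : ∀ x, Tf (x + Nc) = Tf x := by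
    intro x
    rw [hTf]
    exact ee_congr (by linear_combination (-x) * h2)
  have hTsum : ∑ x : ZMod (2 * N), Tf x = ee N (mc * mc) * G0m N := by
    rw [G0m, Finset.mul_sum]
    refine (sum_shift mc (fun x => ee N (mc * mc) * ee N (-(x * x))) Tf fun x => ?_).symm
    show ee N (mc * mc) * ee N (-(x * x)) = Tf (x + mc)
    rw [ee_mul_ee hpos, hTf]
    dsimp only
    refine ee_congr ?_
    rw [hNm]
    ring
  -- the K-part
  set Uf : ZMod (2 * N) → QG N := fun x => ee N (x * (x + Nc)) • KK N (2 * x + Nc) with hUf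
  have hU : ∀ j : ℕ, ((-1 : ℂ) ^ j * tq N ^ (j ^ 2)) • KK N ((2 * j + N : ℕ) : ZMod (2 * N))
      = Uf ((j : ℕ) : ZMod (2 * N)) := by
    intro j
    rw [hUf]
    dsimp only
    congr 1
    · have harg : ((j : ℕ) : ZMod (2 * N)) * (((j : ℕ) : ZMod (2 * N)) + Nc)
          = ((j * (j + N) : ℕ) : ZMod (2 * N)) := by
        rw [hNcdef]; push_cast; ring
      rw [harg, ee_natCast hpos, show j * (j + N) = j ^ 2 + N * j by ring, pow_add, pow_mul,
        tq_pow_N hpos]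
      ring
    · exact KK_congr (by rw [hNcdef]; push_cast; ring)
  have hUper : ∀ x, Uf (x + Nc) = Uf x := by
    intro x
    rw [hUf]
    dsimp only
    congr 1
    · exact ee_congr (by linear_combination (x + Nc) * h2)
    · exact KK_congr (by linear_combination h2)
  have hUsum : ∑ x : ZMod (2 * N), Uf x = ee N (-(mc * mc)) • vb N := by
    rw [vb, Finset.smul_sum]
    refine (sum_shift (-mc) (fun x => ee N (-(mc * mc)) • (ee N (x * x) • KK N (2 * x)))
      Uf fun x => ?_).symm
    show ee N (-(mc * mc)) • (ee N (x * x) • KK N (2 * x)) = Uf (x + -mc)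
    rw [smul_smul, ee_mul_ee hpos, hUf]
    dsimp only
    congr 1
    · exact ee_congr (by rw [hNm]; ring)
    · exact KK_congr (by rw [hNm]; ring)
  -- halving, scalar part
  have hThalf : (∑ k ∈ range N, (-1 : ℂ) ^ k * tq N ^ (-((k : ℤ) ^ 2)))
      = (2 : ℂ)⁻¹ * (ee N (mc * mc) * G0m N) := by
    have hc := sum_univ_periodic Tf hTper
    rw [hTsum] at hc
    have h2s : (2 : ℕ) • (∑ i ∈ range N, Tf ((i : ℕ) : ZMod (2 * N)))
        = 2 * ∑ i ∈ range N, Tf ((i : ℕ) : ZMod (2 * N)) := by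
      rw [nsmul_eq_mul]; norm_num
    rw [h2s] at hc
    rw [Finset.sum_congr rfl fun k _ => hT k]
    linear_combination (-(2 : ℂ)⁻¹) * hc
  -- halving, K part
  have hUhalf : (∑ j ∈ range N, ((-1 : ℂ) ^ j * tq N ^ (j ^ 2)) •
        KK N ((2 * j + N : ℕ) : ZMod (2 * N)))
      = ((2 : ℂ)⁻¹ * ee N (-(mc * mc))) • vb N := by
    have hc := sum_univ_periodic Uf hUper
    rw [hUsum] at hc
    have h2s : (2 : ℕ) • (∑ i ∈ range N, Uf ((i : ℕ) : ZMod (2 * N)))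
        = (2 : ℂ) • ∑ i ∈ range N, Uf ((i : ℕ) : ZMod (2 * N)) := by
      rw [← Nat.cast_smul_eq_nsmul ℂ]; norm_num
    rw [h2s] at hc
    rw [Finset.sum_congr rfl fun j _ => hU j]
    calc ∑ i ∈ range N, Uf ((i : ℕ) : ZMod (2 * N))
        = (2 : ℂ)⁻¹ • ((2 : ℂ) • ∑ i ∈ range N, Uf ((i : ℕ) : ZMod (2 * N))) := by
          rw [smul_smul, inv_mul_cancel₀ (by norm_num : (2:ℂ) ≠ 0), one_smul]
      _ = (2 : ℂ)⁻¹ • (ee N (-(mc * mc)) • vb N) := by rw [← hc]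
      _ = ((2 : ℂ)⁻¹ * ee N (-(mc * mc))) • vb N := by rw [smul_smul]
  -- assemble
  have hone : ee N (mc * mc) * ee N (-(mc * mc)) = 1 := by
    rw [ee_mul_ee hpos, add_neg_cancel, ee_zero hpos]
  have hNc0 : (N : ℂ) ≠ 0 := Nat.cast_ne_zero.mpr hpos.ne'
  rw [velInv, hThalf, hUhalf, smul_smul]
  congr 1
  have : (N:ℂ)⁻¹ * ((2:ℂ)⁻¹ * (ee N (mc * mc) * G0m N)) * ((2:ℂ)⁻¹ * ee N (-(mc * mc)))
      = ((4 * (N:ℂ))⁻¹ * G0m N) * (ee N (mc * mc) * ee N (-(mc * mc))) := by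
    field_simp
    ring
  rw [this, hone, mul_one]

end StmtAux
namespace StmtAux

variable {N : ℕ}

lemma Rmat_eq (hpos : 0 < N) [NeZero (2 * N)] :
    Rmat N = (2 * (N : ℂ))⁻¹ • ∑ j : ZMod (2 * N), ∑ k : ZMod (2 * N),
      ee N (-(j * k)) • (KK N j ⊗ₜ[ℂ] KK N k) := by
  rw [Rmat]
  congr 1
  refine sum_range_to_univ _ _ fun j hj => ?_
  refine sum_range_to_univ _ _ fun k hk => ?_
  congr 1
  rw [← ee_intCast hpos (-((j : ℤ) * (k : ℤ)))]
  exact ee_congr (by push_cast; ring)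

lemma comm_Rmat (hpos : 0 < N) [NeZero (2 * N)] :
    (Algebra.TensorProduct.comm ℂ (QG N) (QG N)) (Rmat N)
      = (2 * (N : ℂ))⁻¹ • ∑ k : ZMod (2 * N), ∑ j : ZMod (2 * N),
          ee N (-(j * k)) • (KK N k ⊗ₜ[ℂ] KK N j) := by
  rw [Rmat_eq hpos, map_smul, map_sum]
  congr 1
  rw [Finset.sum_comm]
  refine Finset.sum_congr rfl fun k _ => ?_
  rw [map_sum]
  refine Finset.sum_congr rfl fun j _ => ?_
  rw [map_smul, Algebra.TensorProduct.comm_tmul]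

lemma smul_tmul_mul (c d : ℂ) (x1 y1 x2 y2 : QG N) :
    (c • (x1 ⊗ₜ[ℂ] y1)) * (d • (x2 ⊗ₜ[ℂ] y2)) = (c * d) • ((x1 * x2) ⊗ₜ[ℂ] (y1 * y2)) := by
  rw [smul_mul_assoc, mul_smul_comm, smul_smul, Algebra.TensorProduct.tmul_mul_tmul]

lemma PRR (hpos : 0 < N) [NeZero (2 * N)] :
    (Algebra.TensorProduct.comm ℂ (QG N) (QG N)) (Rmat N) * Rmat N
      = (2 * (N : ℂ))⁻¹ • ∑ k : ZMod (2 * N), ∑ k' : ZMod (2 * N),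
          ee N (-(k * k')) • (KK N (2 * k) ⊗ₜ[ℂ] KK N k') := by
  rw [comm_Rmat hpos, Rmat_eq hpos, smul_mul_assoc, mul_smul_comm, smul_smul]
  have hflat : (∑ k : ZMod (2 * N), ∑ j : ZMod (2 * N),
        ee N (-(j * k)) • (KK N k ⊗ₜ[ℂ] KK N j)) *
      (∑ j' : ZMod (2 * N), ∑ k' : ZMod (2 * N),
        ee N (-(j' * k')) • (KK N j' ⊗ₜ[ℂ] KK N k'))
      = (2 * (N : ℂ)) • ∑ k : ZMod (2 * N), ∑ k' : ZMod (2 * N),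
          ee N (-(k * k')) • (KK N (2 * k) ⊗ₜ[ℂ] KK N k') := by
    calc (∑ k : ZMod (2 * N), ∑ j : ZMod (2 * N),
        ee N (-(j * k)) • (KK N k ⊗ₜ[ℂ] KK N j)) *
      (∑ j' : ZMod (2 * N), ∑ k' : ZMod (2 * N),
        ee N (-(j' * k')) • (KK N j' ⊗ₜ[ℂ] KK N k'))
        = ∑ k : ZMod (2 * N), ∑ j : ZMod (2 * N), ∑ j' : ZMod (2 * N), ∑ k' : ZMod (2 * N),
            (ee N (-(j * k)) * ee N (-(j' * k'))) • (KK N (k + j') ⊗ₜ[ℂ] KK N (j + k')) := by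
          rw [Finset.sum_mul]
          refine Finset.sum_congr rfl fun k _ => ?_
          rw [Finset.sum_mul]
          refine Finset.sum_congr rfl fun j _ => ?_
          rw [Finset.mul_sum]
          refine Finset.sum_congr rfl fun j' _ => ?_
          rw [Finset.mul_sum]
          refine Finset.sum_congr rfl fun k' _ => ?_
          rw [smul_tmul_mul, KK_mul, KK_mul]
      _ = ∑ k : ZMod (2 * N), ∑ j : ZMod (2 * N), ∑ j' : ZMod (2 * N), ∑ k' : ZMod (2 * N),
            (ee N (-(j * k)) * ee N (-((j' - k) * k'))) • (KK N j' ⊗ₜ[ℂ] KK N (j + k')) := by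
          refine Finset.sum_congr rfl fun k _ => Finset.sum_congr rfl fun j _ => ?_
          refine sum_shift k _ _ fun j' => ?_
          refine Finset.sum_congr rfl fun k' _ => ?_
          congr 1
          · congr 1
            exact ee_congr (by ring)
          · congr 1
            exact KK_congr (by ring)
      _ = ∑ k : ZMod (2 * N), ∑ j : ZMod (2 * N), ∑ j' : ZMod (2 * N), ∑ k' : ZMod (2 * N),
            (ee N (-(j * k)) * ee N (-((j' - k) * (k' - j)))) • (KK N j' ⊗ₜ[ℂ] KK N k') := by
          refine Finset.sum_congr rfl fun k _ => Finset.sum_congr rfl fun j _ =>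
            Finset.sum_congr rfl fun j' _ => ?_
          refine sum_shift j _ _ fun k' => ?_
          congr 1
          · congr 1
            exact ee_congr (by ring)
          · congr 1
            exact KK_congr (by ring)
      _ = ∑ k : ZMod (2 * N), ∑ j' : ZMod (2 * N), ∑ j : ZMod (2 * N), ∑ k' : ZMod (2 * N),
            (ee N (-(j * k)) * ee N (-((j' - k) * (k' - j)))) • (KK N j' ⊗ₜ[ℂ] KK N k') := by
          refine Finset.sum_congr rfl fun k _ => Finset.sum_comm
      _ = ∑ k : ZMod (2 * N), ∑ j' : ZMod (2 * N), ∑ j : ZMod (2 * N), ∑ k' : ZMod (2 * N),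
            (ee N ((j' - 2 * k) * j) * ee N ((k - j') * k')) • (KK N j' ⊗ₜ[ℂ] KK N k') := by
          refine Finset.sum_congr rfl fun k _ => Finset.sum_congr rfl fun j' _ =>
            Finset.sum_congr rfl fun j _ => Finset.sum_congr rfl fun k' _ => ?_
          congr 1
          rw [ee_mul_ee hpos, ee_mul_ee hpos]
          exact ee_congr (by ring)
      _ = ∑ k : ZMod (2 * N), ∑ j' : ZMod (2 * N),
            (∑ j : ZMod (2 * N), ee N ((j' - 2 * k) * j)) •
              (∑ k' : ZMod (2 * N), ee N ((k - j') * k') • (KK N j' ⊗ₜ[ℂ] KK N k')) := by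
          refine Finset.sum_congr rfl fun k _ => Finset.sum_congr rfl fun j' _ => ?_
          rw [Finset.sum_smul]
          refine Finset.sum_congr rfl fun j _ => ?_
          rw [Finset.smul_sum]
          refine Finset.sum_congr rfl fun k' _ => ?_
          rw [smul_smul]
      _ = ∑ k : ZMod (2 * N),
            (2 * (N : ℂ)) • (∑ k' : ZMod (2 * N),
              ee N ((k - 2 * k) * k') • (KK N (2 * k) ⊗ₜ[ℂ] KK N k')) := by
          refine Finset.sum_congr rfl fun k _ => ?_
          have hstep : ∀ j' : ZMod (2 * N),
              (∑ j : ZMod (2 * N), ee N ((j' - 2 * k) * j)) •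
                (∑ k' : ZMod (2 * N), ee N ((k - j') * k') • (KK N j' ⊗ₜ[ℂ] KK N k'))
              = (if j' = 2 * k then (2 * (N : ℂ)) • (∑ k' : ZMod (2 * N),
                  ee N ((k - j') * k') • (KK N j' ⊗ₜ[ℂ] KK N k')) else 0) := by
            intro j'
            rw [sum_ee hpos]
            by_cases h : j' = 2 * k
            · rw [if_pos (by rw [h, sub_self]), if_pos h]
            · rw [if_neg (fun hh => h (sub_eq_zero.mp hh)), if_neg h, zero_smul]
          rw [Finset.sum_congr rfl fun j' _ => hstep j']
          simp only [Finset.sum_ite_eq', mem_univ, if_true]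
      _ = (2 * (N : ℂ)) • ∑ k : ZMod (2 * N), ∑ k' : ZMod (2 * N),
            ee N (-(k * k')) • (KK N (2 * k) ⊗ₜ[ℂ] KK N k') := by
          rw [Finset.smul_sum]
          refine Finset.sum_congr rfl fun k _ => ?_
          congr 1
          refine Finset.sum_congr rfl fun k' _ => ?_
          congr 1
          exact ee_congr (by ring)
  rw [hflat, smul_smul]
  congr 1
  have hNc : (N : ℂ) ≠ 0 := Nat.cast_ne_zero.mpr hpos.ne'
  field_simp

end StmtAux
namespace StmtAux

variable {N : ℕ}

lemma term_congr {A A' B B' C C' : ZMod (2 * N)} (hA : A = A') (hB : B = B') (hC : C = C') :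
    ee N A • (KK N B ⊗ₜ[ℂ] KK N C) = ee N A' • (KK N B' ⊗ₜ[ℂ] KK N C') := by
  rw [hA, hB, hC]

lemma vava (hpos : 0 < N) [NeZero (2 * N)] :
    va N ⊗ₜ[ℂ] va N = ∑ a : ZMod (2 * N), ∑ b : ZMod (2 * N),
      (ee N (-(a * a)) * ee N (-(b * b))) • (KK N (2 * a) ⊗ₜ[ℂ] KK N (2 * b)) := by
  rw [va, TensorProduct.sum_tmul]
  refine Finset.sum_congr rfl fun a _ => ?_
  rw [TensorProduct.tmul_sum]
  refine Finset.sum_congr rfl fun b _ => ?_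
  simp only [TensorProduct.smul_tmul', TensorProduct.tmul_smul, smul_smul]
  exact congrArg (· ⊗ₜ[ℂ] KK N (2 * b)) (congrArg (· • KK N (2 * a)) (mul_comm _ _))

lemma core (hpos : 0 < N) (hN : Even N) [NeZero (2 * N)] :
    (∑ k : ZMod (2 * N), ∑ k' : ZMod (2 * N),
        ee N (-(k * k')) • (KK N (2 * k) ⊗ₜ[ℂ] KK N k')) * (va N ⊗ₜ[ℂ] va N)
      = (2 * (N : ℂ)) • (G0m N •
          ∑ s : ZMod (2 * N), ee N (-(s * s)) • (KK N (2 * s) ⊗ₜ[ℂ] KK N (2 * s))) := by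
  rw [vava hpos]
  calc (∑ k : ZMod (2 * N), ∑ k' : ZMod (2 * N),
        ee N (-(k * k')) • (KK N (2 * k) ⊗ₜ[ℂ] KK N k')) *
      (∑ a : ZMod (2 * N), ∑ b : ZMod (2 * N),
        (ee N (-(a * a)) * ee N (-(b * b))) • (KK N (2 * a) ⊗ₜ[ℂ] KK N (2 * b)))
      = ∑ k : ZMod (2 * N), ∑ k' : ZMod (2 * N), ∑ a : ZMod (2 * N), ∑ b : ZMod (2 * N),
          ee N (-(k * k') + (-(a * a) + -(b * b))) •
            (KK N (2 * k + 2 * a) ⊗ₜ[ℂ] KK N (k' + 2 * b)) := by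
        rw [Finset.sum_mul]
        refine Finset.sum_congr rfl fun k _ => ?_
        rw [Finset.sum_mul]
        refine Finset.sum_congr rfl fun k' _ => ?_
        rw [Finset.mul_sum]
        refine Finset.sum_congr rfl fun a _ => ?_
        rw [Finset.mul_sum]
        refine Finset.sum_congr rfl fun b _ => ?_
        rw [smul_tmul_mul, KK_mul, KK_mul, ee_mul_ee hpos, ee_mul_ee hpos]
    _ = ∑ k : ZMod (2 * N), ∑ a : ZMod (2 * N), ∑ k' : ZMod (2 * N), ∑ b : ZMod (2 * N),
          ee N (-(k * k') + (-(a * a) + -(b * b))) •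
            (KK N (2 * k + 2 * a) ⊗ₜ[ℂ] KK N (k' + 2 * b)) := by
        exact Finset.sum_congr rfl fun k _ => Finset.sum_comm
    _ = ∑ k : ZMod (2 * N), ∑ a : ZMod (2 * N), ∑ b : ZMod (2 * N), ∑ k' : ZMod (2 * N),
          ee N (-(k * k') + (-(a * a) + -(b * b))) •
            (KK N (2 * k + 2 * a) ⊗ₜ[ℂ] KK N (k' + 2 * b)) := by
        exact Finset.sum_congr rfl fun k _ => Finset.sum_congr rfl fun a _ => Finset.sum_comm
    _ = ∑ k : ZMod (2 * N), ∑ a : ZMod (2 * N), ∑ b : ZMod (2 * N), ∑ k' : ZMod (2 * N),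
          ee N (-(k * (k' - 2 * b)) + (-(a * a) + -(b * b))) •
            (KK N (2 * k + 2 * a) ⊗ₜ[ℂ] KK N k') := by
        refine Finset.sum_congr rfl fun k _ => Finset.sum_congr rfl fun a _ =>
          Finset.sum_congr rfl fun b _ => ?_
        refine sum_shift (2 * b) _ _ fun k' => ?_
        exact term_congr (by ring) (by ring) (by ring)
    _ = ∑ k : ZMod (2 * N), ∑ a : ZMod (2 * N), ∑ b : ZMod (2 * N), ∑ k' : ZMod (2 * N),
          ee N (-(k * k') + (k * k + (-(a * a) + -(b * b)))) •
            (KK N (2 * k + 2 * a) ⊗ₜ[ℂ] KK N k') := by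
        refine Finset.sum_congr rfl fun k _ => Finset.sum_congr rfl fun a _ => ?_
        refine sum_shift (-k) _ _ fun b => ?_
        refine Finset.sum_congr rfl fun k' _ => ?_
        exact term_congr (by ring) (by ring) (by ring)
    _ = ∑ k : ZMod (2 * N), ∑ a : ZMod (2 * N), ∑ b : ZMod (2 * N), ∑ k' : ZMod (2 * N),
          ee N (-(k * k') + (2 * a * k + (-(a * a) + -(b * b)))) •
            (KK N (2 * a) ⊗ₜ[ℂ] KK N k') := by
        refine Finset.sum_congr rfl fun k _ => ?_
        refine sum_shift k _ _ fun a => ?_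
        refine Finset.sum_congr rfl fun b _ => Finset.sum_congr rfl fun k' _ => ?_
        exact term_congr (by ring) (by ring) (by ring)
    _ = ∑ k : ZMod (2 * N), ∑ a : ZMod (2 * N), G0m N •
          ∑ k' : ZMod (2 * N),
            ee N ((2 * a - k') * k + -(a * a)) • (KK N (2 * a) ⊗ₜ[ℂ] KK N k') := by
        refine Finset.sum_congr rfl fun k _ => Finset.sum_congr rfl fun a _ => ?_
        rw [G0m, Finset.sum_smul]
        refine Finset.sum_congr rfl fun b _ => ?_
        rw [Finset.smul_sum]
        refine Finset.sum_congr rfl fun k' _ => ?_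
        rw [smul_smul, ee_mul_ee hpos]
        exact term_congr (by ring) rfl rfl
    _ = G0m N • (∑ k : ZMod (2 * N), ∑ a : ZMod (2 * N), ∑ k' : ZMod (2 * N),
          ee N ((2 * a - k') * k + -(a * a)) • (KK N (2 * a) ⊗ₜ[ℂ] KK N k')) := by
        rw [Finset.smul_sum]
        refine Finset.sum_congr rfl fun k _ => ?_
        rw [Finset.smul_sum]
    _ = G0m N • ∑ a : ZMod (2 * N), ∑ k' : ZMod (2 * N), ∑ k : ZMod (2 * N),
          (ee N ((2 * a - k') * k) * ee N (-(a * a))) • (KK N (2 * a) ⊗ₜ[ℂ] KK N k') := by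
        congr 1
        rw [Finset.sum_comm]
        refine Finset.sum_congr rfl fun a _ => ?_
        rw [Finset.sum_comm]
        refine Finset.sum_congr rfl fun k' _ => Finset.sum_congr rfl fun k _ => ?_
        rw [ee_mul_ee hpos]
    _ = G0m N • ∑ a : ZMod (2 * N), ∑ k' : ZMod (2 * N),
          ((if 2 * a - k' = 0 then (2 * (N : ℂ)) else 0) * ee N (-(a * a))) •
            (KK N (2 * a) ⊗ₜ[ℂ] KK N k') := by
        congr 1
        refine Finset.sum_congr rfl fun a _ => Finset.sum_congr rfl fun k' _ => ?_
        rw [← Finset.sum_smul, ← Finset.sum_mul, sum_ee hpos]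
    _ = G0m N • ∑ a : ZMod (2 * N), ∑ k' : ZMod (2 * N),
          (if k' = 2 * a then ((2 * (N : ℂ)) * ee N (-(a * a))) •
            (KK N (2 * a) ⊗ₜ[ℂ] KK N k') else 0) := by
        congr 1
        refine Finset.sum_congr rfl fun a _ => Finset.sum_congr rfl fun k' _ => ?_
        by_cases h : k' = 2 * a
        · rw [if_pos (by rw [h, sub_self]), if_pos h]
        · rw [if_neg (fun hh => h (sub_eq_zero.mp hh).symm), if_neg h, zero_mul, zero_smul]
    _ = G0m N • ∑ a : ZMod (2 * N),
          ((2 * (N : ℂ)) * ee N (-(a * a))) • (KK N (2 * a) ⊗ₜ[ℂ] KK N (2 * a)) := by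
        congr 1
        refine Finset.sum_congr rfl fun a _ => ?_
        simp only [Finset.sum_ite_eq', mem_univ, if_true]
    _ = (2 * (N : ℂ)) • (G0m N •
          ∑ s : ZMod (2 * N), ee N (-(s * s)) • (KK N (2 * s) ⊗ₜ[ℂ] KK N (2 * s))) := by
        rw [smul_comm (2 * (N : ℂ)) (G0m N)]
        congr 1
        rw [Finset.smul_sum]
        refine Finset.sum_congr rfl fun s _ => ?_
        rw [smul_smul]

end StmtAux
open StmtAux

/-- **`(A, R, v)` is a ribbon Hopf algebra**: `v` is invertible with the stated inverse,
`S(v) = v`, and `Δ(v) = P(R)·R·(v ⊗ v)`. -/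
theorem stmt_1 (N : ℕ) (hpos : 0 < N) (hN : Even N) :
    vel N * velInv N = 1 ∧ velInv N * vel N = 1 ∧
    SQG N (vel N) = vel N ∧
    DeltaQG N (vel N)
      = (Algebra.TensorProduct.comm ℂ (QG N) (QG N)) (Rmat N) * Rmat N *
          (vel N ⊗ₜ[ℂ] vel N) := by
  haveI : NeZero (2 * N) := ⟨by omega⟩
  have hNc : (N : ℂ) ≠ 0 := Nat.cast_ne_zero.mpr hpos.ne'
  have h40 : (4 * (N : ℂ)) ≠ 0 := by
    intro h
    apply hNc
    field_simp at h
    simpa using h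
  have h20 : (2 * (N : ℂ)) ≠ 0 := by
    intro h
    apply hNc
    field_simp at h
    simpa using h
  have hu : (4 * (N : ℂ))⁻¹ * (4 * (N : ℂ)) = 1 := inv_mul_cancel₀ h40
  have hG : G0p N * G0m N = 4 * (N : ℂ) := G0_mul hpos hN
  have h1 : vel N * velInv N = 1 := by
    rw [vel_eq hpos hN, velInv_eq hpos hN, smul_mul_assoc, mul_smul_comm, smul_smul,
      va_mul_vb hpos hN, smul_smul]
    have hsc : ((4 * (N : ℂ))⁻¹ * G0p N) * ((4 * (N : ℂ))⁻¹ * G0m N) * (4 * (N : ℂ)) = 1 := by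
      linear_combination ((4 * (N : ℂ))⁻¹ * (4 * (N : ℂ))⁻¹ * (4 * (N : ℂ))) * hG
        + ((4 * (N : ℂ))⁻¹ * (4 * (N : ℂ)) + 1) * hu
    rw [hsc, one_smul]
  refine ⟨h1, ?_, ?_, ?_⟩
  · rw [mul_comm]
    exact h1
  · rw [vel_eq hpos hN, map_smul, S_va hpos]
  · have hD : DeltaQG N (va N)
        = ∑ s : ZMod (2 * N), ee N (-(s * s)) • (KK N (2 * s) ⊗ₜ[ℂ] KK N (2 * s)) := by
      rw [va, map_sum]
      refine Finset.sum_congr rfl fun s _ => ?_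
      rw [map_smul, Delta_KK]
    have hRHS : (Algebra.TensorProduct.comm ℂ (QG N) (QG N)) (Rmat N) * Rmat N *
          (vel N ⊗ₜ[ℂ] vel N)
        = ((((4 * (N : ℂ))⁻¹ * G0p N) * ((4 * (N : ℂ))⁻¹ * G0p N)) *
            ((2 * (N : ℂ))⁻¹ * ((2 * (N : ℂ)) * G0m N))) •
            ∑ s : ZMod (2 * N), ee N (-(s * s)) • (KK N (2 * s) ⊗ₜ[ℂ] KK N (2 * s)) := by
      rw [vel_eq hpos hN]
      rw [← TensorProduct.smul_tmul', TensorProduct.tmul_smul, smul_smul]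
      rw [mul_smul_comm, PRR hpos, smul_mul_assoc, core hpos hN]
      try simp only [smul_smul]
      try ring_nf
    rw [hRHS, vel_eq hpos hN, map_smul, hD]
    congr 1
    have hcc : (2 * (N : ℂ))⁻¹ * ((2 * (N : ℂ)) * G0m N) = G0m N := by
      field_simp
    rw [hcc]
    linear_combination (-((4 * (N : ℂ))⁻¹ * (4 * (N : ℂ))⁻¹ * G0p N)) * hG
      - ((4 * (N : ℂ))⁻¹ * G0p N) * hu
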